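/- arXiv:1801.06916 — 2 statements merged into one kernel-verified Lean document; each statement's English description precedes it below -/
import Mathlib

section
/- For every r ∈ ℕ, every s = (s_1, …, s_r) ∈ ℕ^r, every j ∈ J_s, and every n ∈ ℤ_{≥0} such that (q − 1) does not divide n, the multi-poly-Bernoulli-Carlitz number vanishes: BC_n^{s,j} = 0. -/
open Polynomial PowerSeries

noncomputable section

namespace Carlitz

variable (F : Type) [Field F] [Fintype F]

/-- `q`, the cardinality of the finite field of constants `𝔽_q`. -/
def q : ℕ := Fintype.card F

/-- The Carlitz polynomial `D_i = ∏_{j=0}^{i-1} (θ^{q^i} - θ^{q^j})` (with `D_0 = 1`). -/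
def Dpoly (i : ℕ) : Polynomial F :=
  ∏ j ∈ Finset.range i, (Polynomial.X ^ (q F) ^ i - Polynomial.X ^ (q F) ^ j)

/-- The Carlitz polynomial `L_i = ∏_{j=1}^{i} (θ - θ^{q^j})` (with `L_0 = 1`). -/
def Lpoly (i : ℕ) : Polynomial F :=
  ∏ j ∈ Finset.range i, (Polynomial.X - Polynomial.X ^ (q F) ^ (j + 1))

/-- The Carlitz factorial `Π(n) = ∏_i D_i^{n_i}` where `n = Σ_i n_i q^i` is the base-`q`
expansion of `n`.  This also equals the Carlitz gamma `Γ_{n+1}`. -/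
def cfact (n : ℕ) : Polynomial F :=
  ∏ i ∈ Finset.range (Nat.digits (q F) n).length,
    (Dpoly F i) ^ ((Nat.digits (q F) n).getD i 0)

/-- The inclusion `A = 𝔽_q[θ] → k = 𝔽_q(θ)`. -/
def toK : Polynomial F →+* RatFunc F := algebraMap _ _

/-- The Carlitz exponential `e_C(z) = Σ_{i≥0} z^{q^i}/D_i` as a power series over `k`. -/
def eC : PowerSeries (RatFunc F) :=
  PowerSeries.mk fun n => ∑ i ∈ Finset.range (n + 1),
    if (q F) ^ i = n then (toK F (Dpoly F i))⁻¹ else 0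

/-- The Bernoulli-Carlitz numbers `BC_n`, defined by `Σ_n BC_n z^n/Π(n) = z/e_C(z)`:
since `e_C(z) = z · u(z)` where `u(z) = Σ_m (coeff_{m+1} e_C) z^m` has constant term `1`,
we have `z/e_C(z) = u(z)⁻¹` and `BC_n = Π(n) · coeff_n (u⁻¹)`. -/
def BCnum (n : ℕ) : RatFunc F :=
  toK F (cfact F n) *
    PowerSeries.coeff (R := RatFunc F) n
      (PowerSeries.mk fun m => PowerSeries.coeff (R := RatFunc F) (m + 1) (eC F))⁻¹

/-- The Stirling-Carlitz numbers of the second kind `{n brace m}_C`, defined by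
`Σ_n {n brace m}_C z^n/Π(n) = e_C(z)^m/Π(m)`, i.e. `{n brace m}_C = Π(n)·coeff_n(e_C^m)/Π(m)`. -/
def StC (n m : ℕ) : RatFunc F :=
  toK F (cfact F n) * PowerSeries.coeff (R := RatFunc F) n (eC F ^ m) * (toK F (cfact F m))⁻¹

/-- The (finite) set of strictly decreasing tuples `i : Fin r → ℕ`,
`i_1 > i_2 > ⋯ > i_r ≥ 0`, with all values `< N`. -/
def decTuples (r N : ℕ) : Finset (Fin r → ℕ) :=
  (Finset.univ.filter fun i : Fin r → Fin N => ∀ a b : Fin r, a < b → i b < i a).image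
    fun i l => (i l : ℕ)

/-- The leading (largest) entry `i_1` of a (strictly decreasing) tuple. -/
def lead {r : ℕ} (i : Fin r → ℕ) : ℕ := if h : 0 < r then i ⟨0, h⟩ else 0

/-- The multi-poly-Bernoulli-Carlitz numbers `BC_n^{s,j}`, defined by the generating series
`Σ_n BC_n^{s,j} z^n/Π(n) = Li_s(e_C(z)·u_{1 j_1}, u_{2 j_2}, …, u_{r j_r})/e_C(z)
 = Σ_{i_1 > ⋯ > i_r ≥ 0} e_C(z)^{q^{i_1}-1} ∏_l u_{l j_l}^{q^{i_l}}/L_{i_l}^{s_l}`,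
written out coefficientwise (here `u l` is the datum `u_{l j_l} ∈ A`; the coefficient of
`z^n` in `e_C^{q^{i_1}-1}` vanishes whenever `i_1 > n`, so the sum below is complete). -/
def MPBC {r : ℕ} (s : Fin r → ℕ) (u : Fin r → Polynomial F) (n : ℕ) : RatFunc F :=
  toK F (cfact F n) * ∑ i ∈ decTuples r (n + 1),
    PowerSeries.coeff (R := RatFunc F) n (eC F ^ ((q F) ^ lead i - 1)) *
      ∏ l, (toK F (u l)) ^ ((q F) ^ (i l)) * ((toK F (Lpoly F (i l))) ^ (s l))⁻¹

/-- The two-variable rational function field `K₂ = 𝔽_q(θ)(t)`. -/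
abbrev K2 := RatFunc (RatFunc F)

/-- The inclusion `k = 𝔽_q(θ) → 𝔽_q(θ)(t)`. -/
def liftK : RatFunc F →+* K2 F :=
  (algebraMap (Polynomial (RatFunc F)) (K2 F)).comp Polynomial.C

/-- The inclusion `A = 𝔽_q[θ] → 𝔽_q(θ)(t)`. -/
def liftA : Polynomial F →+* K2 F := (liftK F).comp (toK F)

/-- The inclusion of constants `𝔽_q → 𝔽_q(θ)(t)`. -/
def liftF : F →+* K2 F := (liftA F).comp Polynomial.C

/-- Substitution `θ ↦ t` on a polynomial `P ∈ 𝔽_q[θ]`, landing in `𝔽_q(θ)(t)`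
(where `t` is the outer variable `RatFunc.X`); e.g. `D_i|_{θ=t}`. -/
def subT (P : Polynomial F) : K2 F :=
  Polynomial.eval (RatFunc.X : K2 F) (P.map (liftF F))

/-- Evaluation of a polynomial in `A[t]` in `𝔽_q(θ)(t)` (coefficients included via
`A → 𝔽_q(θ)`, the variable `t` sent to the outer `RatFunc.X`). -/
def evalAT (h : Polynomial (Polynomial F)) : K2 F :=
  Polynomial.eval (RatFunc.X : K2 F) (h.map (liftA F))

/-- The power series `1 - Σ_{i≥0} (∏_{j=1}^{i}(t^{q^i} - θ^{q^j})/D_i|_{θ=t}) x^{q^i}`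
appearing in the definition of the Anderson-Thakur polynomials. -/
def ATgen : PowerSeries (K2 F) :=
  1 - PowerSeries.mk fun m => ∑ i ∈ Finset.range (m + 1),
    if (q F) ^ i = m then
      (∏ j ∈ Finset.range i,
        ((RatFunc.X : K2 F) ^ (q F) ^ i - (liftK F RatFunc.X) ^ (q F) ^ (j + 1))) *
        (subT F (Dpoly F i))⁻¹
    else 0

/-- `H : ℕ → A[t]` is the family of Anderson-Thakur polynomials iff
`{1 - Σ_i (∏_{j=1}^{i}(t^{q^i} - θ^{q^j})/D_i|_{θ=t}) x^{q^i}}⁻¹ = Σ_n (H_n/Γ_{n+1}|_{θ=t}) x^n`,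
i.e. the product of the left-hand factor with the right-hand series equals `1`. -/
def IsATFamily (H : ℕ → Polynomial (Polynomial F)) : Prop :=
  ATgen F * (PowerSeries.mk fun n => evalAT F (H n) * (subT F (cfact F n))⁻¹) = 1

/-- Reduction of a rational function `x ∈ k` whose denominator is coprime to `℘`
into `A/℘A`: reduce numerator and denominator (in lowest terms) and divide. -/
def redmod (℘ : Polynomial F) (x : RatFunc F) : Polynomial F ⧸ Ideal.span {℘} :=
  Ideal.Quotient.mk (Ideal.span {℘}) x.num *
    Ring.inverse (Ideal.Quotient.mk (Ideal.span {℘}) x.denom)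

/-- The finite multiple zeta value `ζ_{𝒜_k}(s)_℘ ∈ A/℘A`: the sum of
`1/(a_1^{s_1} ⋯ a_r^{s_r})` over monic `a_1, …, a_r ∈ A` with
`deg ℘ > deg a_1 > ⋯ > deg a_r ≥ 0`. -/
def finMZV (℘ : Polynomial F) {r : ℕ} (s : Fin r → ℕ) : Polynomial F ⧸ Ideal.span {℘} :=
  ∑ᶠ a ∈ {a : Fin r → Polynomial F |
      (∀ l, (a l).Monic) ∧ (StrictAnti fun l => (a l).natDegree) ∧
        ∀ l, (a l).natDegree < ℘.natDegree},
    ∏ l, Ring.inverse (Ideal.Quotient.mk (Ideal.span {℘}) (a l) ^ (s l))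

/-- The finite Carlitz multiple polylogarithm
`Li_{𝒜_k,s}(u_1, …, u_r)_℘ = Σ_{deg ℘ > i_1 > ⋯ > i_r ≥ 0} u_1^{q^{i_1}} ⋯ u_r^{q^{i_r}}
/ (L_{i_1}^{s_1} ⋯ L_{i_r}^{s_r}) ∈ A/℘A`. -/
def finCMPL (℘ : Polynomial F) {r : ℕ} (s : Fin r → ℕ) (u : Fin r → Polynomial F) :
    Polynomial F ⧸ Ideal.span {℘} :=
  ∑ i ∈ decTuples r ℘.natDegree,
    ∏ l, Ideal.Quotient.mk (Ideal.span {℘}) (u l) ^ ((q F) ^ (i l)) *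
      Ring.inverse (Ideal.Quotient.mk (Ideal.span {℘}) (Lpoly F (i l)) ^ (s l))


lemma qpow_modEq (i : ℕ) : (q F) ^ i ≡ 1 [MOD q F - 1] := by
  have h1 : (1 : ℕ) ≤ q F := Fintype.card_pos
  have : (q F) ≡ 1 [MOD q F - 1] :=
    ((Nat.modEq_iff_dvd' h1).mpr dvd_rfl).symm
  simpa using this.pow i

lemma coeff_eC_eq_zero (a : ℕ) (h : ∀ i, (q F) ^ i ≠ a) :
    PowerSeries.coeff (R := RatFunc F) a (eC F) = 0 := by
  rw [eC, PowerSeries.coeff_mk]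
  exact Finset.sum_eq_zero fun i _ => if_neg (h i)

lemma coeff_eC_pow (m n : ℕ) (h : ¬ n ≡ m [MOD q F - 1]) :
    PowerSeries.coeff (R := RatFunc F) n (eC F ^ m) = 0 := by
  induction m generalizing n with
  | zero =>
    have hn : n ≠ 0 := by rintro rfl; exact h rfl
    simp [PowerSeries.coeff_one, hn]
  | succ m ih =>
    rw [pow_succ, PowerSeries.coeff_mul]
    apply Finset.sum_eq_zero
    intro p hp
    replace hp : p.1 + p.2 = n := Finset.HasAntidiagonal.mem_antidiagonal.mp hp
    by_cases hi : ∃ i, (q F) ^ i = p.2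
    · obtain ⟨i, hi⟩ := hi
      have hp1 : ¬ p.1 ≡ m [MOD q F - 1] := by
        intro hc
        apply h
        have := hc.add ((qpow_modEq F i).trans (Nat.ModEq.refl 1))
        rw [hi] at this
        rw [hp] at this
        exact this
      rw [ih _ hp1, zero_mul]
    · push_neg at hi
      rw [coeff_eC_eq_zero F p.2 hi, mul_zero]

/-- For every `r`, every `s = (s_1, …, s_r) ∈ ℕ^r`, every `j ∈ J_s`
and every `n ≥ 0` with `(q − 1) ∤ n`, the multi-poly-Bernoulli-Carlitz number vanishes:
`BC_n^{s,j} = 0`. -/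
theorem MPBC_vanishes (r : ℕ) (s : Fin r → ℕ) (hs : ∀ l, 0 < s l)
    (H : ℕ → Polynomial (Polynomial F)) (hH : IsATFamily F H)
    (j : Fin r → ℕ) (hj : ∀ l, j l ≤ (H (s l - 1)).natDegree)
    (u : Fin r → Polynomial F) (hu : ∀ l, u l = (H (s l - 1)).coeff (j l))
    (n : ℕ) (hn : ¬ (q F - 1) ∣ n) :
    MPBC F s u n = 0 := by
  rw [MPBC]
  rw [Finset.sum_eq_zero, mul_zero]
  intro i _
  have hz : PowerSeries.coeff (R := RatFunc F) n (eC F ^ ((q F) ^ lead i - 1)) = 0 := by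
    apply coeff_eC_pow
    intro hc
    apply hn
    have h1 : (1 : ℕ) ≤ (q F) ^ lead i := Nat.one_le_pow _ _ Fintype.card_pos
    have hm : (q F) ^ lead i - 1 ≡ 0 [MOD q F - 1] :=
      (Nat.modEq_zero_iff_dvd).mpr ((Nat.modEq_iff_dvd' h1).mp (qpow_modEq F (lead i)).symm)
    exact (Nat.modEq_zero_iff_dvd).mp (hc.trans hm)
  rw [hz, zero_mul]

end Carlitz
end
end

section
/- For every n ∈ ℤ_{≥0}, the Bernoulli-Carlitz number satisfies BC_n = Σ_{j ≥ 0, q^j − 1 ≤ n} (Π(q^j − 1)/L_j) · {n brace q^j − 1}_C = Σ_{j ≥ 0, q^j − 1 ≤ n} ((−1)^j D_j / L_j^2) · {n brace q^j − 1}_C. -/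
open Polynomial PowerSeries

noncomputable section

namespace Carlitz

variable (F : Type) [Field F] [Fintype F]

section Generic
variable {R : Type*} [CommRing R]

lemma coeff_pow_of_agree {f g : PowerSeries R} {n : ℕ}
    (h : ∀ k ≤ n, PowerSeries.coeff (R := R) k f = PowerSeries.coeff (R := R) k g) (m : ℕ) :
    ∀ k ≤ n, PowerSeries.coeff (R := R) k (f ^ m) = PowerSeries.coeff (R := R) k (g ^ m) := by
  induction m with
  | zero => intro k _; rfl
  | succ m ih =>
    intro k hk
    rw [pow_succ, pow_succ, PowerSeries.coeff_mul, PowerSeries.coeff_mul]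
    refine Finset.sum_congr rfl fun p hp => ?_
    have h1 : p.1 ≤ n := le_trans (Finset.HasAntidiagonal.antidiagonal.fst_le hp) hk
    have h2 : p.2 ≤ n := le_trans (Finset.HasAntidiagonal.antidiagonal.snd_le hp) hk
    rw [ih p.1 h1, h p.2 h2]

lemma coeff_pow_char (p : ℕ) [Fact p.Prime] [CharP R p] (f : PowerSeries R) (n : ℕ) :
    PowerSeries.coeff (R := R) n (f ^ p) =
      if p ∣ n then (PowerSeries.coeff (R := R) (n / p) f) ^ p else 0 := by
  have hp : 0 < p := (Fact.out : p.Prime).pos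
  set g : Polynomial R := PowerSeries.trunc (n + 1) f with hg
  have hag : ∀ k ≤ n, PowerSeries.coeff (R := R) k f = PowerSeries.coeff (R := R) k (g : PowerSeries R) := by
    intro k hk
    rw [Polynomial.coeff_coe, hg, PowerSeries.coeff_trunc, if_pos (Nat.lt_succ_of_le hk)]
  have h1 : PowerSeries.coeff (R := R) n (f ^ p) = (g ^ p).coeff n := by
    rw [coeff_pow_of_agree hag p n le_rfl, ← Polynomial.coe_pow, Polynomial.coeff_coe]
  have h2 : g ^ p = (Polynomial.expand R p g).map (frobenius R p) := (Polynomial.map_frobenius_expand p g).symm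
  rw [h1, h2, Polynomial.coeff_map, Polynomial.coeff_expand hp]
  split_ifs with hd
  · rw [frobenius_def, hag (n / p) (Nat.div_le_self n p), Polynomial.coeff_coe]
  · rw [frobenius_def, zero_pow hp.ne']

lemma coeff_pow_char_pow (p : ℕ) [Fact p.Prime] [CharP R p] (e : ℕ) (f : PowerSeries R) (n : ℕ) :
    PowerSeries.coeff (R := R) n (f ^ p ^ e) =
      if p ^ e ∣ n then (PowerSeries.coeff (R := R) (n / p ^ e) f) ^ p ^ e else 0 := by
  have hp : 0 < p := (Fact.out : p.Prime).pos
  induction e generalizing f n with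
  | zero => simp
  | succ e ih =>
    have : f ^ p ^ (e + 1) = (f ^ p) ^ p ^ e := by
      rw [← pow_mul, pow_succ']
    rw [this, ih]
    split_ifs with h1 h2 h2
    · have hd : p ∣ n / p ^ e :=
        (Nat.dvd_div_iff_mul_dvd h1).mpr (by rw [← pow_succ]; exact h2)
      rw [coeff_pow_char, if_pos hd, Nat.div_div_eq_div_mul, ← pow_succ, ← pow_mul, ← pow_succ']
    · rw [coeff_pow_char, if_neg, zero_pow (pow_pos hp e).ne']
      intro hc
      exact h2 (by rw [pow_succ]; exact (Nat.dvd_div_iff_mul_dvd h1).mp hc)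
    · exact absurd (dvd_trans (pow_dvd_pow p (Nat.le_succ e)) h2) h1
    · rfl

end Generic


lemma one_lt_q : 1 < q F := Fintype.one_lt_card

lemma q_pos : 0 < q F := lt_trans Nat.zero_lt_one (one_lt_q F)

lemma X_pow_sub_X_pow_ne_zero {a b : ℕ} (h : a ≠ b) :
    (Polynomial.X ^ a - Polynomial.X ^ b : Polynomial F) ≠ 0 := by
  intro hz
  have hx := sub_eq_zero.mp hz
  apply h
  calc a = ((Polynomial.X : Polynomial F) ^ a).natDegree := (Polynomial.natDegree_X_pow a).symm
  _ = ((Polynomial.X : Polynomial F) ^ b).natDegree := by rw [hx]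
  _ = b := Polynomial.natDegree_X_pow b

lemma Dpoly_ne_zero (i : ℕ) : Dpoly F i ≠ 0 := by
  refine Finset.prod_ne_zero_iff.mpr fun j hj => ?_
  exact X_pow_sub_X_pow_ne_zero F fun he =>
    (Finset.mem_range.mp hj).ne' (Nat.pow_right_injective (one_lt_q F) he)

lemma Lpoly_ne_zero (i : ℕ) : Lpoly F i ≠ 0 := by
  refine Finset.prod_ne_zero_iff.mpr fun j hj => ?_
  have h1 := X_pow_sub_X_pow_ne_zero F (a := 1) (b := (q F) ^ (j + 1))
    (Nat.one_lt_pow (Nat.succ_ne_zero j) (one_lt_q F)).ne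
  simpa using h1

lemma cfact_ne_zero (n : ℕ) : cfact F n ≠ 0 :=
  Finset.prod_ne_zero_iff.mpr fun i _ => pow_ne_zero _ (Dpoly_ne_zero F i)

lemma toK_injective : Function.Injective (toK F) := RatFunc.algebraMap_injective F

lemma toK_ne_zero {P : Polynomial F} (h : P ≠ 0) : toK F P ≠ 0 := fun hz =>
  h (toK_injective F (by rw [hz, map_zero]))

lemma charP_K (p : ℕ) [CharP F p] : CharP (RatFunc F) p :=
  charP_of_injective_ringHom (algebraMap F (RatFunc F)).injective p

lemma Lpoly_succ (j : ℕ) :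
    Lpoly F (j + 1) = Lpoly F j * (Polynomial.X - Polynomial.X ^ (q F) ^ (j + 1)) :=
  Finset.prod_range_succ _ _

lemma Dpoly_succ (p e : ℕ) [Fact p.Prime] [CharP F p] (hq : q F = p ^ e) (i : ℕ) :
    Dpoly F (i + 1) = (Polynomial.X ^ (q F) ^ (i + 1) - Polynomial.X) * (Dpoly F i) ^ (q F) := by
  have hD : (Dpoly F i) ^ (q F) =
      ∏ j ∈ Finset.range i,
        (Polynomial.X ^ (q F) ^ (i + 1) - Polynomial.X ^ (q F) ^ (j + 1) : Polynomial F) := by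
    have key : ∀ a : ℕ, ((Polynomial.X : Polynomial F) ^ (q F) ^ a) ^ (q F)
        = Polynomial.X ^ (q F) ^ (a + 1) := fun a => by
      rw [← pow_mul, ← pow_succ]
    rw [Dpoly, ← Finset.prod_pow]
    refine Finset.prod_congr rfl fun j hj => ?_
    rw [hq, sub_pow_char_pow, ← hq, key, key]
  rw [Dpoly, Finset.prod_range_succ', ← hD, pow_zero, pow_one, mul_comm]

lemma coeff_eC_qpow (i : ℕ) :
    PowerSeries.coeff (R := RatFunc F) ((q F) ^ i) (eC F) = (toK F (Dpoly F i))⁻¹ := by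
  rw [eC, PowerSeries.coeff_mk]
  rw [Finset.sum_eq_single_of_mem i
    (Finset.mem_range.mpr (Nat.lt_succ_of_lt (Nat.lt_pow_self (n := i) (one_lt_q F))))]
  · rw [if_pos rfl]
  · intro j _ hji
    exact if_neg fun he => hji (Nat.pow_right_injective (one_lt_q F) he)

lemma coeff_eC_of_ne {k : ℕ} (h : ∀ i, (q F) ^ i ≠ k) :
    PowerSeries.coeff (R := RatFunc F) k (eC F) = 0 := by
  rw [eC, PowerSeries.coeff_mk]
  exact Finset.sum_eq_zero fun i _ => if_neg (h i)

lemma constantCoeff_eC : PowerSeries.constantCoeff (R := RatFunc F) (eC F) = 0 := by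
  rw [← PowerSeries.coeff_zero_eq_constantCoeff]
  exact coeff_eC_of_ne F fun i => (pow_pos (q_pos F) i).ne'

lemma coeff_eC_pow_zero {m k : ℕ} (h : m < k) :
    PowerSeries.coeff (R := RatFunc F) m (eC F ^ k) = 0 :=
  PowerSeries.X_pow_dvd_iff.mp
    (pow_dvd_pow_of_dvd (PowerSeries.X_dvd_iff.mpr (constantCoeff_eC F)) k) m h

lemma eC_eq_X_mul :
    eC F = PowerSeries.X *
      PowerSeries.mk (fun m => PowerSeries.coeff (R := RatFunc F) (m + 1) (eC F)) := by
  ext k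
  cases k with
  | zero =>
    simp only [PowerSeries.coeff_zero_eq_constantCoeff, map_mul,
      PowerSeries.constantCoeff_X, zero_mul, constantCoeff_eC]
  | succ k => rw [PowerSeries.coeff_succ_X_mul, PowerSeries.coeff_mk]

lemma key_ident (p e : ℕ) [Fact p.Prime] [CharP F p] (hq : q F = p ^ e) (s : ℕ) :
    ∑ j ∈ Finset.range (s + 1),
      (toK F (Lpoly F j))⁻¹ * ((toK F (Dpoly F (s - j)))⁻¹) ^ (q F) ^ j
      = if s = 0 then 1 else 0 := by
  cases s with
  | zero => simp [Lpoly, Dpoly]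
  | succ s =>
    rw [if_neg (Nat.succ_ne_zero s)]
    set T : ℕ → RatFunc F := fun j =>
      (toK F (Lpoly F j))⁻¹ * ((toK F (Dpoly F (s + 1 - j)))⁻¹) ^ (q F) ^ j with hT
    have hXne : ∀ m : ℕ, 0 < m → (Polynomial.X ^ (q F) ^ m - Polynomial.X : Polynomial F) ≠ 0 := by
      intro m hm
      nth_rewrite 2 [← pow_one (Polynomial.X : Polynomial F)]
      exact X_pow_sub_X_pow_ne_zero F (Nat.one_lt_pow hm.ne' (one_lt_q F)).ne'
    have hα : toK F (Polynomial.X ^ (q F) ^ (s + 1) - Polynomial.X) ≠ 0 :=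
      toK_ne_zero F (hXne (s + 1) (Nat.succ_pos s))
    have main : toK F (Polynomial.X ^ (q F) ^ (s + 1) - Polynomial.X) *
        (∑ j ∈ Finset.range (s + 1 + 1), T j) = 0 := by
      rw [Finset.mul_sum]
      have hsplit : ∀ j, toK F (Polynomial.X ^ (q F) ^ (s + 1) - Polynomial.X) * T j =
          toK F (Polynomial.X ^ (q F) ^ (s + 1) - Polynomial.X ^ (q F) ^ j) * T j +
          toK F (Polynomial.X ^ (q F) ^ j - Polynomial.X) * T j := by
        intro j
        rw [← add_mul, ← map_add, sub_add_sub_cancel]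
      rw [Finset.sum_congr rfl fun j _ => hsplit j, Finset.sum_add_distrib]
      -- A-part: drop the j = s+1 term
      rw [Finset.sum_range_succ (fun j =>
        toK F (Polynomial.X ^ (q F) ^ (s + 1) - Polynomial.X ^ (q F) ^ j) * T j) (s + 1)]
      rw [sub_self, map_zero, zero_mul, add_zero]
      -- B-part: drop the j = 0 term
      rw [Finset.sum_range_succ' (fun j =>
        toK F (Polynomial.X ^ (q F) ^ j - Polynomial.X) * T j) (s + 1)]
      rw [pow_zero, pow_one, sub_self, map_zero, zero_mul, add_zero]
      rw [← Finset.sum_add_distrib]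
      refine Finset.sum_eq_zero fun j hj => ?_
      have hjs : j ≤ s := Nat.lt_succ_iff.mp (Finset.mem_range.mp hj)
      have hsub1 : s + 1 - j = (s - j) + 1 := by omega
      have hsub2 : s + 1 - (j + 1) = s - j := by omega
      have hqj : (q F) ^ j = p ^ (e * j) := by rw [hq, ← pow_mul]
      have hqj1 : (q F) ^ (j + 1) = p ^ (e * (j + 1)) := by rw [hq, ← pow_mul]
      -- rewrite the A term
      have hpow : ((Polynomial.X ^ (q F) ^ (s + 1 - j) - Polynomial.X : Polynomial F)) ^ (q F) ^ j
          = Polynomial.X ^ (q F) ^ (s + 1) - Polynomial.X ^ (q F) ^ j := by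
        rw [hqj, sub_pow_char_pow, ← hqj]
        congr 1
        rw [← pow_mul, ← pow_add, Nat.sub_add_cancel (by omega)]
      have hDrec : Dpoly F (s + 1 - j) =
          (Polynomial.X ^ (q F) ^ (s + 1 - j) - Polynomial.X) * (Dpoly F (s - j)) ^ (q F) := by
        rw [hsub1]
        exact Dpoly_succ F p e hq (s - j)
      have hA : toK F (Polynomial.X ^ (q F) ^ (s + 1) - Polynomial.X ^ (q F) ^ j) * T j =
          (toK F (Lpoly F j))⁻¹ * ((toK F (Dpoly F (s - j)))⁻¹) ^ (q F) ^ (j + 1) := by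
        rw [hT]
        simp only
        rw [← hpow, map_pow, mul_comm ((toK F (Lpoly F j))⁻¹), ← mul_assoc, ← mul_pow,
          hDrec, map_mul, mul_inv, ← mul_assoc,
          mul_inv_cancel₀ (toK_ne_zero F (hXne (s + 1 - j) (by omega))),
          one_mul, map_pow, inv_pow, ← pow_mul, ← pow_succ']
        ring
      -- rewrite the B term
      have hLrec : toK F (Lpoly F (j + 1)) =
          -(toK F (Lpoly F j) * toK F (Polynomial.X ^ (q F) ^ (j + 1) - Polynomial.X)) := by
        rw [Lpoly_succ, map_mul, ← neg_sub, map_neg, mul_neg]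
      have hB : toK F (Polynomial.X ^ (q F) ^ (j + 1) - Polynomial.X) * T (j + 1) =
          -((toK F (Lpoly F j))⁻¹ * ((toK F (Dpoly F (s - j)))⁻¹) ^ (q F) ^ (j + 1)) := by
        have hv : toK F (Polynomial.X ^ (q F) ^ (j + 1) - Polynomial.X) ≠ 0 :=
          toK_ne_zero F (hXne (j + 1) (Nat.succ_pos j))
        have helper : ∀ v a d : RatFunc F, v ≠ 0 → v * (-(a * v⁻¹) * d) = -(a * d) := by
          intro v a d hv
          calc v * (-(a * v⁻¹) * d) = -(v * v⁻¹ * (a * d)) := by ring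
          _ = -(a * d) := by rw [mul_inv_cancel₀ hv, one_mul]
        rw [hT]
        simp only
        rw [hsub2, hLrec, inv_neg, mul_inv]
        exact helper _ _ _ hv
      rw [hA, hB, add_neg_cancel]
    exact (mul_eq_zero.mp main).resolve_left hα


lemma key2 (p e : ℕ) [Fact p.Prime] [CharP F p] (hq : q F = p ^ e) (m : ℕ) :
    ∑ j ∈ Finset.range (m + 1),
      (toK F (Lpoly F j))⁻¹ * PowerSeries.coeff (R := RatFunc F) m (eC F ^ (q F) ^ j)
      = PowerSeries.coeff (R := RatFunc F) m (PowerSeries.X : PowerSeries (RatFunc F)) := by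
  haveI : CharP (RatFunc F) p := charP_K F p
  have hco : ∀ (j k : ℕ), PowerSeries.coeff (R := RatFunc F) k (eC F ^ (q F) ^ j)
      = if (q F) ^ j ∣ k then
          (PowerSeries.coeff (R := RatFunc F) (k / (q F) ^ j) (eC F)) ^ (q F) ^ j
        else 0 := by
    intro j k
    have h1 : (q F) ^ j = p ^ (e * j) := by rw [hq, ← pow_mul]
    rw [h1, coeff_pow_char_pow]
  rw [PowerSeries.coeff_X]
  by_cases hm : ∃ s, (q F) ^ s = m
  · obtain ⟨s, rfl⟩ := hm
    have hqs1 : (q F) ^ s = 1 ↔ s = 0 := by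
      constructor
      · intro h1
        by_contra hs
        exact absurd h1 (Nat.one_lt_pow hs (one_lt_q F)).ne'
      · intro h1; rw [h1, pow_zero]
    have hs_le : s + 1 ≤ (q F) ^ s + 1 := Nat.succ_le_succ (Nat.lt_pow_self (n := s) (one_lt_q F)).le
    have hvan : ∀ j ∈ Finset.range ((q F) ^ s + 1), j ∉ Finset.range (s + 1) →
        (toK F (Lpoly F j))⁻¹ * PowerSeries.coeff (R := RatFunc F) ((q F) ^ s) (eC F ^ (q F) ^ j)
          = 0 := by
      intro j _ hj
      have hjs : s < j := by simpa [Finset.mem_range, Nat.lt_succ_iff] using hj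
      rw [hco, if_neg, mul_zero]
      rw [Nat.pow_dvd_pow_iff_le_right (one_lt_q F)]
      omega
    rw [← Finset.sum_subset (Finset.range_subset_range.mpr hs_le) hvan]
    have hterm : ∀ j ∈ Finset.range (s + 1),
        (toK F (Lpoly F j))⁻¹ * PowerSeries.coeff (R := RatFunc F) ((q F) ^ s) (eC F ^ (q F) ^ j)
          = (toK F (Lpoly F j))⁻¹ * ((toK F (Dpoly F (s - j)))⁻¹) ^ (q F) ^ j := by
      intro j hj
      have hjs : j ≤ s := Nat.lt_succ_iff.mp (Finset.mem_range.mp hj)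
      rw [hco, if_pos (pow_dvd_pow _ hjs), Nat.pow_div hjs (q_pos F), coeff_eC_qpow]
    rw [Finset.sum_congr rfl hterm, key_ident F p e hq s, if_congr hqs1 rfl rfl]
  · rw [if_neg fun h1 => hm ⟨0, by rw [pow_zero, h1]⟩]
    refine Finset.sum_eq_zero fun j _ => ?_
    rw [hco]
    split_ifs with hd
    · rw [coeff_eC_of_ne F fun i hi => hm ⟨i + j, by
        rw [pow_add, hi, Nat.div_mul_cancel hd]⟩]
      rw [zero_pow (pow_pos (q_pos F) j).ne', mul_zero]
    · rw [mul_zero]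

lemma W_eq_inv (p e : ℕ) [Fact p.Prime] [CharP F p] (hq : q F = p ^ e) :
    (PowerSeries.mk fun m => PowerSeries.coeff (R := RatFunc F) (m + 1) (eC F))⁻¹
      = PowerSeries.mk fun m => ∑ j ∈ Finset.range (m + 1),
          (toK F (Lpoly F j))⁻¹ *
            PowerSeries.coeff (R := RatFunc F) m (eC F ^ ((q F) ^ j - 1)) := by
  set u : PowerSeries (RatFunc F) :=
    PowerSeries.mk fun m => PowerSeries.coeff (R := RatFunc F) (m + 1) (eC F) with hu
  set W : PowerSeries (RatFunc F) :=
    PowerSeries.mk fun m => ∑ j ∈ Finset.range (m + 1),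
      (toK F (Lpoly F j))⁻¹ *
        PowerSeries.coeff (R := RatFunc F) m (eC F ^ ((q F) ^ j - 1)) with hW
  have hEW : eC F * W = PowerSeries.X := by
    ext m
    rw [PowerSeries.coeff_mul]
    have hWb : ∀ b ≤ m, PowerSeries.coeff (R := RatFunc F) b W
        = ∑ j ∈ Finset.range (m + 1), (toK F (Lpoly F j))⁻¹ *
            PowerSeries.coeff (R := RatFunc F) b (eC F ^ ((q F) ^ j - 1)) := by
      intro b hb
      rw [hW, PowerSeries.coeff_mk]
      refine Finset.sum_subset (Finset.range_subset_range.mpr (by omega)) ?_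
      intro j _ hjb
      have hj1 : b + 1 ≤ j := by simpa [Finset.mem_range, Nat.lt_succ_iff] using hjb
      have hj2 := Nat.lt_pow_self (n := j) (one_lt_q F)
      rw [coeff_eC_pow_zero F (by omega), mul_zero]
    calc ∑ ab ∈ Finset.HasAntidiagonal.antidiagonal m,
          PowerSeries.coeff (R := RatFunc F) ab.1 (eC F) * PowerSeries.coeff (R := RatFunc F) ab.2 W
        = ∑ ab ∈ Finset.HasAntidiagonal.antidiagonal m, ∑ j ∈ Finset.range (m + 1),
            (toK F (Lpoly F j))⁻¹ * (PowerSeries.coeff (R := RatFunc F) ab.1 (eC F) *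
              PowerSeries.coeff (R := RatFunc F) ab.2 (eC F ^ ((q F) ^ j - 1))) := by
          refine Finset.sum_congr rfl fun ab hab => ?_
          rw [hWb ab.2 (Finset.HasAntidiagonal.antidiagonal.snd_le hab), Finset.mul_sum]
          exact Finset.sum_congr rfl fun j _ => by ring
      _ = ∑ j ∈ Finset.range (m + 1), ∑ ab ∈ Finset.HasAntidiagonal.antidiagonal m,
            (toK F (Lpoly F j))⁻¹ * (PowerSeries.coeff (R := RatFunc F) ab.1 (eC F) *
              PowerSeries.coeff (R := RatFunc F) ab.2 (eC F ^ ((q F) ^ j - 1))) :=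
          Finset.sum_comm
      _ = ∑ j ∈ Finset.range (m + 1), (toK F (Lpoly F j))⁻¹ *
            PowerSeries.coeff (R := RatFunc F) m (eC F ^ (q F) ^ j) := by
          refine Finset.sum_congr rfl fun j _ => ?_
          rw [← Finset.mul_sum]
          congr 1
          have h9 : (q F) ^ j - 1 + 1 = (q F) ^ j := by
            have := pow_pos (q_pos F) j
            omega
          rw [← PowerSeries.coeff_mul, ← pow_succ', h9]
      _ = PowerSeries.coeff (R := RatFunc F) m PowerSeries.X := key2 F p e hq m
  have hXu : eC F = PowerSeries.X * u := eC_eq_X_mul F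
  have huW : u * W = 1 := by
    have hX : (PowerSeries.X : PowerSeries (RatFunc F)) ≠ 0 := PowerSeries.X_ne_zero
    refine mul_left_cancel₀ hX ?_
    rw [← mul_assoc, ← hXu, hEW, mul_one]
  have hcu : PowerSeries.constantCoeff (R := RatFunc F) u ≠ 0 := by
    have h1 : PowerSeries.coeff (R := RatFunc F) 1 (eC F) = (toK F (Dpoly F 0))⁻¹ := by
      simpa using coeff_eC_qpow F 0
    rw [hu, ← PowerSeries.coeff_zero_eq_constantCoeff, PowerSeries.coeff_mk, zero_add, h1]
    simp [Dpoly]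
  have hune : u ≠ 0 := fun h => hcu (by rw [h, map_zero])
  refine mul_left_cancel₀ hune ?_
  rw [PowerSeries.mul_inv_cancel _ hcu, huW]

lemma digits_q_pow_sub_one (j : ℕ) :
    Nat.digits (q F) ((q F) ^ j - 1) = List.replicate j (q F - 1) := by
  induction j with
  | zero => simp
  | succ j ih =>
    have h2 : 1 < q F := one_lt_q F
    have hpos : 0 < (q F) ^ (j + 1) - 1 := by
      have := Nat.one_lt_pow (n := j + 1) (by omega) h2; omega
    have h3 : q F * ((q F) ^ j - 1) = q F * (q F) ^ j - q F := by
      rw [Nat.mul_sub, mul_one]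
    have h4 : (q F) ^ (j + 1) = q F * (q F) ^ j := by rw [pow_succ, mul_comm]
    have h1 : 1 ≤ (q F) ^ j := Nat.one_le_pow _ _ (q_pos F)
    have h5 : q F ≤ q F * (q F) ^ j := Nat.le_mul_of_pos_right _ (pow_pos (q_pos F) j)
    have harith : (q F) ^ (j + 1) - 1 = q F * ((q F) ^ j - 1) + (q F - 1) := by omega
    rw [Nat.digits_def' h2 hpos, harith]
    have hmod : (q F * ((q F) ^ j - 1) + (q F - 1)) % q F = q F - 1 := by
      rw [Nat.mul_add_mod, Nat.mod_eq_of_lt (by omega)]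
    have hdiv : (q F * ((q F) ^ j - 1) + (q F - 1)) / q F = (q F) ^ j - 1 := by
      rw [Nat.mul_add_div (q_pos F), Nat.div_eq_of_lt (by omega), add_zero]
    rw [hmod, hdiv, ih, List.replicate_succ]

lemma cfact_q_pow_sub_one (j : ℕ) :
    cfact F ((q F) ^ j - 1) = ∏ i ∈ Finset.range j, (Dpoly F i) ^ (q F - 1) := by
  rw [cfact, digits_q_pow_sub_one, List.length_replicate]
  refine Finset.prod_congr rfl fun i hi => ?_
  congr 1
  simp [List.getD, Finset.mem_range.mp hi]

lemma cfact_mul_Lpoly (p e : ℕ) [Fact p.Prime] [CharP F p] (hq : q F = p ^ e) (j : ℕ) :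
    cfact F ((q F) ^ j - 1) * Lpoly F j = (-1 : Polynomial F) ^ j * Dpoly F j := by
  rw [cfact_q_pow_sub_one]
  induction j with
  | zero => simp [Lpoly, Dpoly]
  | succ j ih =>
    have hD : Dpoly F j * (Dpoly F j) ^ (q F - 1) = (Dpoly F j) ^ (q F) := by
      rw [← pow_succ']
      congr 1
      have := one_lt_q F
      omega
    rw [Finset.prod_range_succ, Lpoly_succ, Dpoly_succ F p e hq j]
    calc (∏ i ∈ Finset.range j, (Dpoly F i) ^ (q F - 1)) * (Dpoly F j) ^ (q F - 1) *
          (Lpoly F j * (Polynomial.X - Polynomial.X ^ (q F) ^ (j + 1)))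
        = (∏ i ∈ Finset.range j, (Dpoly F i) ^ (q F - 1)) * Lpoly F j *
          ((Dpoly F j) ^ (q F - 1) * (Polynomial.X - Polynomial.X ^ (q F) ^ (j + 1))) := by
          ring
      _ = (-1 : Polynomial F) ^ j * Dpoly F j *
          ((Dpoly F j) ^ (q F - 1) * (Polynomial.X - Polynomial.X ^ (q F) ^ (j + 1))) := by
          rw [ih]
      _ = (-1 : Polynomial F) ^ (j + 1) *
          ((Polynomial.X ^ (q F) ^ (j + 1) - Polynomial.X) *
            (Dpoly F j * (Dpoly F j) ^ (q F - 1))) := by ring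
      _ = (-1 : Polynomial F) ^ (j + 1) *
          ((Polynomial.X ^ (q F) ^ (j + 1) - Polynomial.X) * (Dpoly F j) ^ (q F)) := by
          rw [hD]

/-- For every `n ≥ 0`,
`BC_n = Σ_{j ≥ 0, q^j − 1 ≤ n} (Π(q^j − 1)/L_j) · {n brace q^j − 1}_C
      = Σ_{j ≥ 0, q^j − 1 ≤ n} ((−1)^j D_j/L_j^2) · {n brace q^j − 1}_C`.
(Any `j` with `q^j − 1 ≤ n` satisfies `j ≤ n`, so the range below exhausts all such `j`.) -/
theorem BCnum_eq_sum_StC (n : ℕ) :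
    BCnum F n =
      ∑ j ∈ (Finset.range (n + 1)).filter (fun j => (q F) ^ j - 1 ≤ n),
        toK F (cfact F ((q F) ^ j - 1)) / toK F (Lpoly F j) * StC F n ((q F) ^ j - 1) ∧
    BCnum F n =
      ∑ j ∈ (Finset.range (n + 1)).filter (fun j => (q F) ^ j - 1 ≤ n),
        (-1 : RatFunc F) ^ j * toK F (Dpoly F j) / (toK F (Lpoly F j)) ^ 2 *
          StC F n ((q F) ^ j - 1) := by
  obtain ⟨p, hpc⟩ := CharP.exists F
  haveI := hpc
  obtain ⟨e, hp, hcard⟩ := FiniteField.card F p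
  haveI : Fact p.Prime := ⟨hp⟩
  have hq : q F = p ^ (e : ℕ) := hcard
  have hb : ∀ j : ℕ, toK F (Lpoly F j) ≠ 0 := fun j => toK_ne_zero F (Lpoly_ne_zero F j)
  have hBC : BCnum F n = ∑ j ∈ Finset.range (n + 1), toK F (cfact F n) *
      ((toK F (Lpoly F j))⁻¹ *
        PowerSeries.coeff (R := RatFunc F) n (eC F ^ ((q F) ^ j - 1))) := by
    rw [BCnum, W_eq_inv F p e hq, PowerSeries.coeff_mk, Finset.mul_sum]
  have hsum1 : (∑ j ∈ (Finset.range (n + 1)).filter (fun j => (q F) ^ j - 1 ≤ n),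
        toK F (cfact F ((q F) ^ j - 1)) / toK F (Lpoly F j) * StC F n ((q F) ^ j - 1))
      = ∑ j ∈ Finset.range (n + 1), toK F (cfact F n) *
          ((toK F (Lpoly F j))⁻¹ *
            PowerSeries.coeff (R := RatFunc F) n (eC F ^ ((q F) ^ j - 1))) := by
    rw [Finset.sum_filter]
    refine Finset.sum_congr rfl fun j _ => ?_
    by_cases hle : (q F) ^ j - 1 ≤ n
    · rw [if_pos hle, StC]
      have ha : toK F (cfact F ((q F) ^ j - 1)) ≠ 0 := toK_ne_zero F (cfact_ne_zero F _)
      have helper : ∀ a b c x : RatFunc F, a ≠ 0 →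
          a / b * (c * x * a⁻¹) = c * (b⁻¹ * x) := by
        intro a b c x ha0
        calc a / b * (c * x * a⁻¹) = a * a⁻¹ * (c * (b⁻¹ * x)) := by
              rw [div_eq_mul_inv]; ring
        _ = c * (b⁻¹ * x) := by rw [mul_inv_cancel₀ ha0, one_mul]
      exact helper _ _ _ _ ha
    · rw [if_neg hle, coeff_eC_pow_zero F (by omega), mul_zero, mul_zero]
  constructor
  · rw [hBC]
    exact hsum1.symm
  · rw [hBC, ← hsum1]
    refine Finset.sum_congr rfl fun j _ => ?_
    congr 1
    have h1 : toK F (cfact F ((q F) ^ j - 1)) * toK F (Lpoly F j)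
        = (-1 : RatFunc F) ^ j * toK F (Dpoly F j) := by
      rw [← map_mul, cfact_mul_Lpoly F p e hq j, map_mul, map_pow, map_neg, map_one]
    rw [div_eq_div_iff (hb j) (pow_ne_zero 2 (hb j))]
    linear_combination h1 * toK F (Lpoly F j)

end Carlitz
end
end
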